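/- With h = u + v + u⁻¹ + v⁻¹ + u⁻¹v⁻¹ in A = ℂ⟨u^{±1},v^{±1}⟩, the Kontsevich double bracket satisfies ⟨⟨h,h⟩⟩_K = 1 ⊗ a - h ⊗ b + e ⊗ 1, where a = u⁻¹ + v⁻¹ - u⁻¹v⁻¹ + v⁻¹u⁻¹ + u⁻¹v⁻¹u⁻¹ + v⁻¹u⁻¹v⁻¹ + u⁻¹v⁻¹u⁻¹v⁻¹, b = u⁻¹v⁻¹, and e = uv - vu. -/

import Mathlib

open scoped TensorProduct

noncomputable section

abbrev A : Type := MonoidAlgebra ℂ (FreeGroup Bool)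

def u : A := MonoidAlgebra.of ℂ (FreeGroup Bool) (FreeGroup.of false)
def v : A := MonoidAlgebra.of ℂ (FreeGroup Bool) (FreeGroup.of true)
def ui : A := MonoidAlgebra.of ℂ (FreeGroup Bool) (FreeGroup.of false)⁻¹
def vi : A := MonoidAlgebra.of ℂ (FreeGroup Bool) (FreeGroup.of true)⁻¹

/-- The structure of a Kontsevich double bracket on A: a bilinear map
A × A → A ⊗ A satisfying both Leibniz rules and the prescribed values on the
generators u, v. -/
structure KontsevichBracket (db : A →ₗ[ℂ] A →ₗ[ℂ] A ⊗[ℂ] A) : Prop where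
  outer : ∀ a b c : A,
    db a (b * c) = db a b * ((1 : A) ⊗ₜ[ℂ] c) + (b ⊗ₜ[ℂ] (1 : A)) * db a c
  inner : ∀ a b c : A,
    db (a * b) c = db a c * (b ⊗ₜ[ℂ] (1 : A)) + ((1 : A) ⊗ₜ[ℂ] a) * db b c
  huv : db u v = -((v * u) ⊗ₜ[ℂ] (1 : A))
  hvu : db v u = (u * v) ⊗ₜ[ℂ] (1 : A)
  huu : db u u = 0
  hvv : db v v = 0

/- STATEMENT 15: With h = u + v + u⁻¹ + v⁻¹ + u⁻¹v⁻¹, the Kontsevich double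
bracket satisfies ⟨⟨h,h⟩⟩ = 1 ⊗ a - h ⊗ b + e ⊗ 1 with
a = u⁻¹ + v⁻¹ - u⁻¹v⁻¹ + v⁻¹u⁻¹ + u⁻¹v⁻¹u⁻¹ + v⁻¹u⁻¹v⁻¹ + u⁻¹v⁻¹u⁻¹v⁻¹,
b = u⁻¹v⁻¹, e = uv - vu. -/

def h : A := u + v + ui + vi + ui * vi
def a : A := ui + vi - ui * vi + vi * ui + ui * vi * ui + vi * ui * vi + ui * vi * ui * vi
def b : A := ui * vi
def e : A := u * v - v * u

/- Auxiliary group relations -/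

lemma uui : u * ui = 1 := by rw [u, ui, ← map_mul, mul_inv_cancel, map_one]
lemma uiu : ui * u = 1 := by rw [u, ui, ← map_mul, inv_mul_cancel, map_one]
lemma vvi : v * vi = 1 := by rw [v, vi, ← map_mul, mul_inv_cancel, map_one]
lemma viv : vi * v = 1 := by rw [v, vi, ← map_mul, inv_mul_cancel, map_one]

lemma uui' (x : A) : u * (ui * x) = x := by rw [← mul_assoc, uui, one_mul]
lemma uiu' (x : A) : ui * (u * x) = x := by rw [← mul_assoc, uiu, one_mul]
lemma vvi' (x : A) : v * (vi * x) = x := by rw [← mul_assoc, vvi, one_mul]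
lemma viv' (x : A) : vi * (v * x) = x := by rw [← mul_assoc, viv, one_mul]

lemma tnm (x y : A ⊗[ℂ] A) : (-x) * y = -(x * y) := neg_mul x y
lemma tmn (x y : A ⊗[ℂ] A) : x * (-y) = -(x * y) := mul_neg x y
lemma tnn (x : A ⊗[ℂ] A) : -(-x) = x := neg_neg x
lemma tzm (x : A ⊗[ℂ] A) : 0 * x = 0 := zero_mul x
lemma tmz (x : A ⊗[ℂ] A) : x * 0 = 0 := mul_zero x
lemma tnz : -(0 : A ⊗[ℂ] A) = 0 := neg_zero
lemma tza (x : A ⊗[ℂ] A) : 0 + x = x := zero_add x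
lemma taz (x : A ⊗[ℂ] A) : x + 0 = x := add_zero x
lemma tmassoc (x y z : A ⊗[ℂ] A) : x * y * z = x * (y * z) := mul_assoc x y z

section Bracket

variable (db : A →ₗ[ℂ] A →ₗ[ℂ] A ⊗[ℂ] A) (hK : KontsevichBracket db)
include hK

lemma db_one_right (x : A) : db x 1 = 0 := by
  have h0 := hK.outer x 1 1
  rw [mul_one, ← Algebra.TensorProduct.one_def, mul_one, one_mul] at h0
  exact right_eq_add.mp h0

lemma db_one_left (x : A) : db 1 x = 0 := by
  have h0 := hK.inner 1 1 x
  rw [mul_one, ← Algebra.TensorProduct.one_def, mul_one, one_mul] at h0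
  exact right_eq_add.mp h0

lemma db_inv_right (x y yi : A) (h1 : y * yi = 1) (h2 : yi * y = 1) :
    db x yi = -((yi ⊗ₜ[ℂ] (1 : A)) * (db x y * ((1 : A) ⊗ₜ[ℂ] yi))) := by
  have h0 := hK.outer x y yi
  rw [h1, db_one_right db hK] at h0
  have h3 : (y ⊗ₜ[ℂ] (1 : A)) * db x yi = -(db x y * ((1 : A) ⊗ₜ[ℂ] yi)) :=
    eq_neg_of_add_eq_zero_right h0.symm
  calc db x yi = ((yi * y) ⊗ₜ[ℂ] ((1 : A) * 1)) * db x yi := by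
        rw [h2, mul_one, ← Algebra.TensorProduct.one_def, one_mul]
    _ = (yi ⊗ₜ[ℂ] (1 : A)) * ((y ⊗ₜ[ℂ] (1 : A)) * db x yi) := by
        rw [← mul_assoc, Algebra.TensorProduct.tmul_mul_tmul]
    _ = -((yi ⊗ₜ[ℂ] (1 : A)) * (db x y * ((1 : A) ⊗ₜ[ℂ] yi))) := by
        rw [h3, tmn]

lemma db_inv_left (x y yi : A) (h1 : y * yi = 1) (h2 : yi * y = 1) :
    db yi x = -(((1 : A) ⊗ₜ[ℂ] yi) * (db y x * (yi ⊗ₜ[ℂ] (1 : A)))) := by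
  have h0 := hK.inner y yi x
  rw [h1, db_one_left db hK] at h0
  have h3 : ((1 : A) ⊗ₜ[ℂ] y) * db yi x = -(db y x * (yi ⊗ₜ[ℂ] (1 : A))) :=
    eq_neg_of_add_eq_zero_right h0.symm
  calc db yi x = (((1 : A) * 1) ⊗ₜ[ℂ] (yi * y)) * db yi x := by
        rw [h2, mul_one, ← Algebra.TensorProduct.one_def, one_mul]
    _ = ((1 : A) ⊗ₜ[ℂ] yi) * (((1 : A) ⊗ₜ[ℂ] y) * db yi x) := by
        rw [← mul_assoc, Algebra.TensorProduct.tmul_mul_tmul]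
    _ = -(((1 : A) ⊗ₜ[ℂ] yi) * (db y x * (yi ⊗ₜ[ℂ] (1 : A)))) := by
        rw [h3, tmn]

lemma duui : db u ui = 0 := by
  rw [db_inv_right db hK u u ui uui uiu, hK.huu]; simp only [tzm, tmz, tnz, tza, taz, Algebra.TensorProduct.tmul_mul_tmul, tnm, tmn, tnn, tmassoc, one_mul, mul_one]

lemma duvi : db u vi = u ⊗ₜ[ℂ] vi := by
  rw [db_inv_right db hK u v vi vvi viv, hK.huv]
  simp only [Algebra.TensorProduct.tmul_mul_tmul, tnm, tmn, tnn, tzm, tmz, tnz, tza, taz, tmassoc, mul_assoc, one_mul, mul_one, uui, uiu, vvi, viv, uui', uiu', vvi', viv']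

lemma dvui : db v ui = -(v ⊗ₜ[ℂ] ui) := by
  rw [db_inv_right db hK v u ui uui uiu, hK.hvu]
  simp only [Algebra.TensorProduct.tmul_mul_tmul, tnm, tmn, tnn, tzm, tmz, tnz, tza, taz, tmassoc, mul_assoc, one_mul, mul_one, uui, uiu, vvi, viv, uui', uiu', vvi', viv']

lemma dvvi : db v vi = 0 := by
  rw [db_inv_right db hK v v vi vvi viv, hK.hvv]; simp only [tzm, tmz, tnz, tza, taz, Algebra.TensorProduct.tmul_mul_tmul, tnm, tmn, tnn, tmassoc, one_mul, mul_one]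

lemma duiu : db ui u = 0 := by
  rw [db_inv_left db hK u u ui uui uiu, hK.huu]; simp only [tzm, tmz, tnz, tza, taz, Algebra.TensorProduct.tmul_mul_tmul, tnm, tmn, tnn, tmassoc, one_mul, mul_one]

lemma duiv : db ui v = v ⊗ₜ[ℂ] ui := by
  rw [db_inv_left db hK v u ui uui uiu, hK.huv]
  simp only [Algebra.TensorProduct.tmul_mul_tmul, tnm, tmn, tnn, tzm, tmz, tnz, tza, taz, tmassoc, mul_assoc, one_mul, mul_one, uui, uiu, vvi, viv, uui', uiu', vvi', viv']

lemma dviu : db vi u = -(u ⊗ₜ[ℂ] vi) := by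
  rw [db_inv_left db hK u v vi vvi viv, hK.hvu]
  simp only [Algebra.TensorProduct.tmul_mul_tmul, tnm, tmn, tnn, tzm, tmz, tnz, tza, taz, tmassoc, mul_assoc, one_mul, mul_one, uui, uiu, vvi, viv, uui', uiu', vvi', viv']

lemma dviv : db vi v = 0 := by
  rw [db_inv_left db hK v v vi vvi viv, hK.hvv]; simp only [tzm, tmz, tnz, tza, taz, Algebra.TensorProduct.tmul_mul_tmul, tnm, tmn, tnn, tmassoc, one_mul, mul_one]

lemma duiui : db ui ui = 0 := by
  rw [db_inv_right db hK ui u ui uui uiu, duiu db hK]; simp only [tzm, tmz, tnz, tza, taz, Algebra.TensorProduct.tmul_mul_tmul, tnm, tmn, tnn, tmassoc, one_mul, mul_one]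

lemma duivi : db ui vi = -((1 : A) ⊗ₜ[ℂ] (ui * vi)) := by
  rw [db_inv_right db hK ui v vi vvi viv, duiv db hK]
  simp only [Algebra.TensorProduct.tmul_mul_tmul, tnm, tmn, tnn, tzm, tmz, tnz, tza, taz, tmassoc, mul_assoc, one_mul, mul_one, uui, uiu, vvi, viv, uui', uiu', vvi', viv']

lemma dviui : db vi ui = (1 : A) ⊗ₜ[ℂ] (vi * ui) := by
  rw [db_inv_right db hK vi u ui uui uiu, dviu db hK]
  simp only [Algebra.TensorProduct.tmul_mul_tmul, tnm, tmn, tnn, tzm, tmz, tnz, tza, taz, tmassoc, mul_assoc, one_mul, mul_one, uui, uiu, vvi, viv, uui', uiu', vvi', viv']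

lemma dvivi : db vi vi = 0 := by
  rw [db_inv_right db hK vi v vi vvi viv, dviv db hK]; simp only [tzm, tmz, tnz, tza, taz, Algebra.TensorProduct.tmul_mul_tmul, tnm, tmn, tnn, tmassoc, one_mul, mul_one]

lemma duw : db u (ui * vi) = (1 : A) ⊗ₜ[ℂ] vi := by
  rw [hK.outer u ui vi, duui db hK, duvi db hK]
  simp only [Algebra.TensorProduct.tmul_mul_tmul, tnm, tmn, tnn, tzm, tmz, tnz, tza, taz, tmassoc, mul_assoc, one_mul, mul_one, uui, uiu, vvi, viv, uui', uiu', vvi', viv']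

lemma dvw : db v (ui * vi) = -(v ⊗ₜ[ℂ] (ui * vi)) := by
  rw [hK.outer v ui vi, dvui db hK, dvvi db hK]
  simp only [Algebra.TensorProduct.tmul_mul_tmul, tnm, tmn, tnn, tzm, tmz, tnz, tza, taz, tmassoc, mul_assoc, one_mul, mul_one, uui, uiu, vvi, viv, uui', uiu', vvi', viv']

lemma duiw : db ui (ui * vi) = -(ui ⊗ₜ[ℂ] (ui * vi)) := by
  rw [hK.outer ui ui vi, duiui db hK, duivi db hK]
  simp only [Algebra.TensorProduct.tmul_mul_tmul, tnm, tmn, tnn, tzm, tmz, tnz, tza, taz, tmassoc, mul_assoc, one_mul, mul_one, uui, uiu, vvi, viv, uui', uiu', vvi', viv']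

lemma dviw : db vi (ui * vi) = (1 : A) ⊗ₜ[ℂ] (vi * (ui * vi)) := by
  rw [hK.outer vi ui vi, dviui db hK, dvivi db hK]
  simp only [Algebra.TensorProduct.tmul_mul_tmul, tnm, tmn, tnn, tzm, tmz, tnz, tza, taz, tmassoc, mul_assoc, one_mul, mul_one, uui, uiu, vvi, viv, uui', uiu', vvi', viv']

lemma dwu : db (ui * vi) u = -(u ⊗ₜ[ℂ] (ui * vi)) := by
  rw [hK.inner ui vi u, duiu db hK, dviu db hK]
  simp only [Algebra.TensorProduct.tmul_mul_tmul, tnm, tmn, tnn, tzm, tmz, tnz, tza, taz, tmassoc, mul_assoc, one_mul, mul_one, uui, uiu, vvi, viv, uui', uiu', vvi', viv']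

lemma dwv : db (ui * vi) v = (1 : A) ⊗ₜ[ℂ] ui := by
  rw [hK.inner ui vi v, duiv db hK, dviv db hK]
  simp only [Algebra.TensorProduct.tmul_mul_tmul, tnm, tmn, tnn, tzm, tmz, tnz, tza, taz, tmassoc, mul_assoc, one_mul, mul_one, uui, uiu, vvi, viv, uui', uiu', vvi', viv']

lemma dwui : db (ui * vi) ui = (1 : A) ⊗ₜ[ℂ] (ui * (vi * ui)) := by
  rw [hK.inner ui vi ui, duiui db hK, dviui db hK]
  simp only [Algebra.TensorProduct.tmul_mul_tmul, tnm, tmn, tnn, tzm, tmz, tnz, tza, taz, tmassoc, mul_assoc, one_mul, mul_one, uui, uiu, vvi, viv, uui', uiu', vvi', viv']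

lemma dwvi : db (ui * vi) vi = -(vi ⊗ₜ[ℂ] (ui * vi)) := by
  rw [hK.inner ui vi vi, duivi db hK, dvivi db hK]
  simp only [Algebra.TensorProduct.tmul_mul_tmul, tnm, tmn, tnn, tzm, tmz, tnz, tza, taz, tmassoc, mul_assoc, one_mul, mul_one, uui, uiu, vvi, viv, uui', uiu', vvi', viv']

lemma dww : db (ui * vi) (ui * vi) =
    -((ui * vi) ⊗ₜ[ℂ] (ui * vi)) + (1 : A) ⊗ₜ[ℂ] (ui * (vi * (ui * vi))) := by
  rw [hK.inner ui vi (ui * vi), duiw db hK, dviw db hK]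
  simp only [Algebra.TensorProduct.tmul_mul_tmul, tnm, tmn, tnn, tzm, tmz, tnz, tza, taz, tmassoc, mul_assoc, one_mul, mul_one, uui, uiu, vvi, viv, uui', uiu', vvi', viv']

end Bracket

theorem kontsevich_double_bracket_hh
    (db : A →ₗ[ℂ] A →ₗ[ℂ] A ⊗[ℂ] A) (hK : KontsevichBracket db) :
    db h h = (1 : A) ⊗ₜ[ℂ] a - h ⊗ₜ[ℂ] b + e ⊗ₜ[ℂ] (1 : A) := by
  simp only [h, map_add, LinearMap.add_apply]
  rw [hK.huu, hK.huv, hK.hvu, hK.hvv, duui db hK, duvi db hK, dvui db hK, dvvi db hK,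
    duiu db hK, duiv db hK, dviu db hK, dviv db hK, duiui db hK, duivi db hK,
    dviui db hK, dvivi db hK, duw db hK, dvw db hK, duiw db hK, dviw db hK,
    dwu db hK, dwv db hK, dwui db hK, dwvi db hK, dww db hK]
  simp only [a, b, e, TensorProduct.tmul_add, TensorProduct.add_tmul,
    TensorProduct.tmul_sub, TensorProduct.sub_tmul, mul_assoc]
  abel
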